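/- Let C be a category and let X : SimplexCategoryᵒᵖ ⥤ C be a simplicial object in C. Then there exists a cosimplicial object Y : SimplexCategory ⥤ C such that: (i) Y.obj [n] = X.obj (op [n+1]) for every natural number n; (ii) for every n and every i : Fin (n+2), the coface map Y.map (δ i) : Y.obj [n] ⟶ Y.obj [n+1] equals X.map ((σ i).op), where δ i : [n] ⟶ [n+1] and σ i : [n+2] ⟶ [n+1] are the face and degeneracy maps of SimplexCategory; (iii) for every n and every j : Fin (n+1), the codegeneracy map Y.map (σ j) : Y.obj [n+1] ⟶ Y.obj [n] equals X.map ((δ j.succ).op), where σ j : [n+1] ⟶ [n] and δ j.succ : [n+1] ⟶ [n+2]. (The paper's statement that 'inside every simplicial object sits a cosimplicial object', obtained by precomposing with the décalage-like functor e.) -/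

import Mathlib

open CategoryTheory Finset

def cnt {N M : ℕ} (f : Fin N →o Fin M) (j : ℕ) : ℕ :=
  (Finset.univ.filter (fun i : Fin N => (f i : ℕ) < j)).card

lemma cnt_le {N M : ℕ} (f : Fin N →o Fin M) (j : ℕ) : cnt f j ≤ N := by
  simpa [cnt] using (Finset.card_filter_le _ _).trans (by simp)

lemma galois {N M : ℕ} (f : Fin N →o Fin M) (j : ℕ) (x : Fin N) :
    (x : ℕ) < cnt f j ↔ (f x : ℕ) < j := by
  unfold cnt
  constructor
  · intro hx
    by_contra hfx
    have hsub : Finset.univ.filter (fun i : Fin N => (f i : ℕ) < j) ⊆ Finset.Iio x := by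
      intro b hb
      simp only [mem_filter] at hb
      simp only [Finset.mem_Iio]
      by_contra hbx
      exact hfx (lt_of_le_of_lt (Fin.le_iff_val_le_val.mp (f.monotone (not_lt.mp hbx))) hb.2)
    have := Finset.card_le_card hsub
    rw [Fin.card_Iio] at this
    omega
  · intro hfx
    have hsub : Finset.Iic x ⊆ Finset.univ.filter (fun i : Fin N => (f i : ℕ) < j) := by
      intro b hb
      simp only [Finset.mem_Iic] at hb
      simp only [mem_filter, Finset.mem_univ, true_and]
      exact lt_of_le_of_lt (Fin.le_iff_val_le_val.mp (f.monotone hb)) hfx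
    have := Finset.card_le_card hsub
    rw [Fin.card_Iic] at this
    omega

lemma cnt_eq {N M : ℕ} (f : Fin N →o Fin M) (j : ℕ) (c : ℕ) (hc : c ≤ N)
    (h : ∀ x : Fin N, (f x : ℕ) < j ↔ (x : ℕ) < c) : cnt f j = c := by
  rcases lt_trichotomy (cnt f j) c with h1 | h1 | h1
  · have hx : (⟨cnt f j, lt_of_lt_of_le h1 hc⟩ : Fin N) = ⟨cnt f j, _⟩ := rfl
    have := (h ⟨cnt f j, lt_of_lt_of_le h1 hc⟩).mpr h1
    have := (galois f j ⟨cnt f j, lt_of_lt_of_le h1 hc⟩).mpr this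
    simp at this
  · exact h1
  · have hcN : c < N := lt_of_lt_of_le h1 (cnt_le f j)
    have := (galois f j ⟨c, hcN⟩).mp h1
    have := (h ⟨c, hcN⟩).mp this
    simp at this

def emap {m n : SimplexCategory} (f : m ⟶ n) :
    SimplexCategory.mk (n.len + 1) ⟶ SimplexCategory.mk (m.len + 1) :=
  SimplexCategory.Hom.mk
    { toFun := fun j => ⟨cnt f.toOrderHom j, by
        have := cnt_le f.toOrderHom (j : ℕ)
        simp only [SimplexCategory.len_mk] at *; omega⟩
      monotone' := by
        intro a b hab
        simp only [Fin.mk_le_mk, cnt]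
        apply Finset.card_le_card
        intro i hi
        simp only [mem_filter] at hi ⊢
        exact ⟨hi.1, lt_of_lt_of_le hi.2 hab⟩ }

lemma emap_apply {m n : SimplexCategory} (f : m ⟶ n) (j : Fin (n.len + 2)) :
    ((emap f).toOrderHom j : ℕ) = cnt f.toOrderHom j := rfl

lemma emap_id (m : SimplexCategory) : emap (𝟙 m) = 𝟙 _ := by
  apply SimplexCategory.Hom.ext
  ext j
  rw [emap_apply]
  refine cnt_eq _ _ _ (by simp [SimplexCategory.len_mk]; omega) fun x => ?_
  rfl

lemma emap_comp {m n k : SimplexCategory} (f : m ⟶ n) (g : n ⟶ k) :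
    emap (f ≫ g) = emap g ≫ emap f := by
  apply SimplexCategory.Hom.ext
  ext j
  show ((emap (f ≫ g)).toOrderHom j : ℕ) = ((emap f).toOrderHom ((emap g).toOrderHom j) : ℕ)
  rw [emap_apply, emap_apply]
  refine cnt_eq _ _ _ (cnt_le _ _) fun x => ?_
  show (g.toOrderHom (f.toOrderHom x) : ℕ) < (j : ℕ) ↔ _
  exact ((galois f.toOrderHom _ x).trans (galois g.toOrderHom (j : ℕ) _)).symm

def efun : SimplexCategory ⥤ SimplexCategoryᵒᵖ where
  obj x := Opposite.op (SimplexCategory.mk (x.len + 1))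
  map f := (emap f).op
  map_id x := by show (emap (𝟙 x)).op = _; rw [emap_id]; rfl
  map_comp f g := by show (emap (_ ≫ _)).op = _; rw [emap_comp]; rfl

lemma succAbove_val {n : ℕ} (p : Fin (n + 1)) (i : Fin n) :
    (p.succAbove i : ℕ) = if (i : ℕ) < (p : ℕ) then (i : ℕ) else (i : ℕ) + 1 := by
  rcases lt_or_ge ((i : ℕ)) ((p : ℕ)) with h | h
  · rw [Fin.succAbove_of_castSucc_lt _ _ (by simpa [Fin.lt_iff_val_lt_val] using h), if_pos h]
    rfl
  · rw [Fin.succAbove_of_le_castSucc _ _ (by simpa [Fin.le_iff_val_le_val] using h),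
      if_neg (by omega)]
    rfl

lemma predAbove_val {n : ℕ} (p : Fin n) (i : Fin (n + 1)) :
    (p.predAbove i : ℕ) = if (p : ℕ) < (i : ℕ) then (i : ℕ) - 1 else (i : ℕ) := by
  rcases lt_or_ge ((p : ℕ)) ((i : ℕ)) with h | h
  · rw [Fin.predAbove_of_castSucc_lt _ _ (by simpa [Fin.lt_iff_val_lt_val] using h), if_pos h]
    rfl
  · rw [Fin.predAbove_of_le_castSucc _ _ (by simpa [Fin.le_iff_val_le_val] using h),
      if_neg (by omega)]
    rfl

lemma delta_val {n : ℕ} (i : Fin (n + 2)) (x : Fin (n + 1)) :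
    (((SimplexCategory.δ i).toOrderHom x) : ℕ) =
      if (x : ℕ) < (i : ℕ) then (x : ℕ) else (x : ℕ) + 1 := by
  have : ((SimplexCategory.δ i).toOrderHom x) = i.succAbove x := rfl
  rw [this, succAbove_val]

lemma sigma_val {n : ℕ} (i : Fin (n + 1)) (x : Fin (n + 2)) :
    (((SimplexCategory.σ i).toOrderHom x) : ℕ) =
      if (i : ℕ) < (x : ℕ) then (x : ℕ) - 1 else (x : ℕ) := by
  have : ((SimplexCategory.σ i).toOrderHom x) = i.predAbove x := rfl
  rw [this, predAbove_val]

lemma emap_δ (n : ℕ) (i : Fin (n + 2)) :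
    emap (SimplexCategory.δ i) = SimplexCategory.σ i := by
  apply SimplexCategory.Hom.ext
  ext j
  rw [emap_apply]
  show cnt _ _ = ((SimplexCategory.σ i).toOrderHom j : ℕ)
  refine cnt_eq _ _ _ ?_ fun x => ?_
  · exact Nat.lt_succ_iff.mp (Fin.is_lt _)
  · show ((SimplexCategory.δ i).toOrderHom x : ℕ) < (j : ℕ) ↔
      (x : ℕ) < ((SimplexCategory.σ i).toOrderHom j : ℕ)
    rw [delta_val, sigma_val]
    have hx := x.is_lt
    have hi := i.is_lt
    split_ifs <;> omega

lemma emap_σ (n : ℕ) (j : Fin (n + 1)) :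
    emap (SimplexCategory.σ j) = SimplexCategory.δ j.succ.castSucc := by
  apply SimplexCategory.Hom.ext
  ext l
  rw [emap_apply]
  show cnt _ _ = ((SimplexCategory.δ j.succ.castSucc).toOrderHom l : ℕ)
  refine cnt_eq _ _ _ ?_ fun x => ?_
  · exact Nat.lt_succ_iff.mp (Fin.is_lt _)
  · show ((SimplexCategory.σ j).toOrderHom x : ℕ) < (l : ℕ) ↔
      (x : ℕ) < ((SimplexCategory.δ j.succ.castSucc).toOrderHom l : ℕ)
    rw [sigma_val, delta_val]
    have hx := x.is_lt
    have hj := j.is_lt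
    have hjc : ((j.succ.castSucc : Fin (n + 3)) : ℕ) = (j : ℕ) + 1 := by simp
    rw [hjc]
    split_ifs <;> omega

theorem stmt8 {C : Type*} [Category C] (X : CategoryTheory.SimplicialObject C) :
    ∃ Y : CategoryTheory.CosimplicialObject C,
      ∃ h : ∀ n : ℕ, Y.obj (SimplexCategory.mk n) =
          X.obj (Opposite.op (SimplexCategory.mk (n + 1))),
        (∀ (n : ℕ) (i : Fin (n + 2)),
          Y.map (SimplexCategory.δ i) =
            eqToHom (h n) ≫ X.map (SimplexCategory.σ i).op ≫ eqToHom (h (n + 1)).symm) ∧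
        (∀ (n : ℕ) (j : Fin (n + 1)),
          Y.map (SimplexCategory.σ j) =
            eqToHom (h (n + 1)) ≫ X.map (SimplexCategory.δ j.succ.castSucc).op ≫
              eqToHom (h n).symm) := by
  refine ⟨efun ⋙ X, fun n => rfl, fun n i => ?_, fun n j => ?_⟩
  · change _ = 𝟙 _ ≫ _ ≫ 𝟙 _
    simp only [Category.id_comp, Category.comp_id]
    show X.map (emap (SimplexCategory.δ i)).op = _
    rw [emap_δ]
    exact (Category.comp_id _).symm
  · change _ = 𝟙 _ ≫ _ ≫ 𝟙 _
    simp only [Category.id_comp, Category.comp_id]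
    show X.map (emap (SimplexCategory.σ j)).op = _
    rw [emap_σ]
    exact (Category.comp_id _).symm
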